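/- Let G be a finite group with distinct minimal normal subgroups N₁ ≅ (C_p)^a (a ≥ 3) and N₂ ≅ C_p for the same prime p. Then G has two non-conjugate core-free subgroups H₁, H₂ with H_i ∩ H_i^g ≠ 1 for all g ∈ G. -/

import Mathlib

open scoped Pointwise


/-- The conjugate subgroup `g⁻¹ H g`. -/
def conjSub {G : Type*} [Group G] (H : Subgroup G) (g : G) : Subgroup G :=
  H.map (MulAut.conj g).toMonoidHom

/-- `N` is a minimal normal subgroup of `G`. -/
def IsMinNormal {G : Type*} [Group G] (N : Subgroup G) : Prop :=
  N ≠ ⊥ ∧ N.Normal ∧ ∀ M : Subgroup G, M.Normal → M ≤ N → M = ⊥ ∨ M = N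

lemma card_mul_le_of_disjoint {G : Type*} [Group G] [Finite G] {A B C : Subgroup G}
    (hA : A ≤ C) (hB : B ≤ C) (h : A ⊓ B = ⊥) :
    Nat.card A * Nat.card B ≤ Nat.card C := by
  have hinj : Function.Injective
      (fun ab : A × B => (⟨ab.1.1 * ab.2.1, C.mul_mem (hA ab.1.2) (hB ab.2.2)⟩ : C)) := by
    rintro ⟨⟨a₁, ha₁⟩, ⟨b₁, hb₁⟩⟩ ⟨⟨a₂, ha₂⟩, ⟨b₂, hb₂⟩⟩ hab
    simp only [Subtype.mk.injEq, Prod.mk.injEq] at hab ⊢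
    have h1 : a₂⁻¹ * a₁ = b₂ * b₁⁻¹ := by
      rw [inv_mul_eq_iff_eq_mul, ← mul_assoc, ← hab, mul_assoc, mul_inv_cancel, mul_one]
    have h2 : a₂⁻¹ * a₁ ∈ A ⊓ B :=
      ⟨A.mul_mem (A.inv_mem ha₂) ha₁, h1 ▸ B.mul_mem hb₂ (B.inv_mem hb₁)⟩
    rw [h, Subgroup.mem_bot] at h2
    have ha : a₁ = a₂ := by
      have := congrArg (a₂ * ·) h2
      simpa [← mul_assoc] using this
    refine ⟨ha, ?_⟩
    have := hab
    rw [ha] at this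
    exact mul_left_cancel this
  calc Nat.card A * Nat.card B = Nat.card (A × B) := (Nat.card_prod _ _).symm
    _ ≤ Nat.card C := Nat.card_le_card_of_injective _ hinj

lemma conjSub_card {G : Type*} [Group G] (H : Subgroup G) (g : G) :
    Nat.card (conjSub H g) = Nat.card H :=
  (Nat.card_congr (H.equivMapOfInjective _ (MulAut.conj g).injective).toEquiv).symm

lemma conjSub_le {G : Type*} [Group G] {H N : Subgroup G} (hN : N.Normal) (h : H ≤ N) (g : G) :
    conjSub H g ≤ N := by
  rintro _ ⟨x, hx, rfl⟩
  exact hN.conj_mem x (h hx) g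

/-- Evaluation at a coordinate, as a monoid hom on multiplicative pi types. -/
def evHom (p a : ℕ) (i : Fin a) : Multiplicative (Fin a → ZMod p) →* Multiplicative (ZMod p) where
  toFun m := Multiplicative.ofAdd (Multiplicative.toAdd m i)
  map_one' := rfl
  map_mul' _ _ := rfl

/-- If a finite group `G` has distinct minimal normal subgroups `N₁ ≅ (C_p)^a` (`a ≥ 3`)
and `N₂ ≅ C_p` for the same prime `p`, then `G` has two non-conjugate core-free subgroups
`H₁, H₂` with `Hᵢ ∩ Hᵢ^g ≠ 1` for all `g ∈ G`. -/
theorem stmt_5 {G : Type*} [Group G] [Finite G] (N₁ N₂ : Subgroup G) (p a : ℕ)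
    (hp : p.Prime) (ha : 3 ≤ a) (hne : N₁ ≠ N₂)
    (hmin₁ : IsMinNormal N₁) (hmin₂ : IsMinNormal N₂)
    (hiso₁ : Nonempty (N₁ ≃* Multiplicative (Fin a → ZMod p)))
    (hiso₂ : Nonempty (N₂ ≃* Multiplicative (ZMod p))) :
    ∃ H₁ H₂ : Subgroup G,
      H₁.normalCore = ⊥ ∧ H₂.normalCore = ⊥ ∧
      (∀ g : G, conjSub H₁ g ≠ H₂) ∧
      (∀ g : G, H₁ ⊓ conjSub H₁ g ≠ ⊥) ∧
      (∀ g : G, H₂ ⊓ conjSub H₂ g ≠ ⊥) := by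
  haveI hfp : Fact p.Prime := ⟨hp⟩
  obtain ⟨e₁⟩ := hiso₁
  obtain ⟨e₂⟩ := hiso₂
  obtain ⟨hN₁ne, hN₁norm, hN₁min⟩ := hmin₁
  obtain ⟨hN₂ne, hN₂norm, hN₂min⟩ := hmin₂
  haveI := hN₁norm
  haveI := hN₂norm
  have hp1 : 1 < p := hp.one_lt
  -- cardinalities of N₁ and N₂
  have hcardM : Nat.card (Multiplicative (Fin a → ZMod p)) = p ^ a := by
    rw [Nat.card_congr Multiplicative.toAdd, Nat.card_fun, Nat.card_zmod,
      Nat.card_eq_fintype_card, Fintype.card_fin]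
  have hcard₁ : Nat.card N₁ = p ^ a := by
    rw [Nat.card_congr e₁.toEquiv]; exact hcardM
  have hcard₂ : Nat.card N₂ = p := by
    rw [Nat.card_congr e₂.toEquiv, Nat.card_congr Multiplicative.toAdd, Nat.card_zmod]
  -- N₁ ∩ N₂ = ⊥
  have hinter : N₁ ⊓ N₂ = ⊥ := by
    rcases hN₂min (N₁ ⊓ N₂) inferInstance inf_le_right with h | h
    · exact h
    · have h2 : N₂ ≤ N₁ := h ▸ inf_le_left
      rcases hN₁min N₂ inferInstance h2 with h' | h'
      · exact absurd h' hN₂ne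
      · exact absurd h'.symm hne
  -- commuting
  have hcommN : ∀ u v : G, u ∈ N₁ → v ∈ N₂ → Commute u v := fun u v hu hv =>
    Subgroup.commute_of_normal_of_disjoint N₁ N₂ hN₁norm hN₂norm
      (disjoint_iff.2 hinter) u v hu hv
  have hcomm₁ : ∀ u v : G, u ∈ N₁ → v ∈ N₁ → Commute u v := by
    intro u v hu hv
    have : (⟨u, hu⟩ : N₁) * ⟨v, hv⟩ = ⟨v, hv⟩ * ⟨u, hu⟩ :=
      e₁.injective (by rw [map_mul, map_mul, mul_comm])
    exact congrArg Subtype.val this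
  -- exponent p in N₁
  have hN₁p : ∀ u : G, ∀ hu : u ∈ N₁, u ^ p = 1 := by
    intro u hu
    have : (⟨u, hu⟩ : N₁) ^ p = 1 := by
      apply e₁.injective
      rw [map_pow, map_one]
      apply Multiplicative.toAdd.injective
      show p • (Multiplicative.toAdd (e₁ ⟨u, hu⟩)) = 0
      funext i
      simp [ZMod.natCast_self]
    calc u ^ p = ((⟨u, hu⟩ : N₁) ^ p : N₁) := by rw [SubmonoidClass.coe_pow]
      _ = 1 := by rw [this]; rfl
  -- the subgroup K and element x
  set i0 : Fin a := ⟨0, by omega⟩ with hi0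
  set φ : N₁ →* Multiplicative (ZMod p) := (evHom p a i0).comp e₁.toMonoidHom with hφ
  have hφsurj : Function.Surjective φ := by
    intro c
    refine ⟨e₁.symm (Multiplicative.ofAdd (fun _ => Multiplicative.toAdd c)), ?_⟩
    show (evHom p a i0) (e₁ (e₁.symm _)) = c
    rw [e₁.apply_symm_apply]
    rfl
  set K : Subgroup G := (φ.ker).map N₁.subtype with hK
  have hKle : K ≤ N₁ := Subgroup.map_subtype_le _
  have hcardK : Nat.card K = p ^ (a - 1) := by
    have h1 : Nat.card K = Nat.card φ.ker :=
      (Nat.card_congr ((φ.ker).equivMapOfInjective _ N₁.subtype_injective).toEquiv).symm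
    have h2 : Nat.card N₁ = Nat.card (N₁ ⧸ φ.ker) * Nat.card φ.ker :=
      Subgroup.card_eq_card_quotient_mul_card_subgroup _
    have h3 : Nat.card (N₁ ⧸ φ.ker) = p := by
      rw [Nat.card_congr (QuotientGroup.quotientKerEquivOfSurjective φ hφsurj).toEquiv,
        Nat.card_congr Multiplicative.toAdd, Nat.card_zmod]
    rw [hcard₁, h3, ← h1] at h2
    have h4 : p * Nat.card K = p * p ^ (a - 1) := by
      rw [← h2, ← pow_succ']
      congr 1
      omega
    exact Nat.eq_of_mul_eq_mul_left hp.pos h4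
  -- membership test for K via φ
  have hmemK : ∀ u : N₁, (u : G) ∈ K ↔ u ∈ φ.ker := by
    intro u
    constructor
    · rintro ⟨v, hv, hvu⟩
      rwa [show v = u from Subtype.ext hvu] at hv
    · intro hu
      exact ⟨u, hu, rfl⟩
  -- the element x
  set xh : N₁ := e₁.symm (Multiplicative.ofAdd (Pi.single i0 1)) with hxh
  set x : G := (xh : G) with hx
  have hxN : x ∈ N₁ := xh.2
  have hφx : φ xh = Multiplicative.ofAdd (1 : ZMod p) := by
    show (evHom p a i0) (e₁ (e₁.symm _)) = _
    rw [e₁.apply_symm_apply]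
    apply Multiplicative.toAdd.injective
    show (Pi.single i0 (1 : ZMod p) : Fin a → ZMod p) i0 = (1 : ZMod p)
    rw [Pi.single_eq_same]
  have hxpow : ∀ n : ℤ, x ^ n ∈ K → (p : ℤ) ∣ n := by
    intro n hn
    have hxn : x ^ n = ((xh ^ n : N₁) : G) := by rw [SubgroupClass.coe_zpow]
    rw [hxn, hmemK] at hn
    have : φ (xh ^ n) = Multiplicative.ofAdd ((n : ZMod p)) := by
      rw [map_zpow, hφx]
      apply Multiplicative.toAdd.injective
      show n • (1 : ZMod p) = (n : ZMod p)
      simp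
    rw [MonoidHom.mem_ker, this] at hn
    have h0 : ((n : ZMod p)) = 0 := hn
    exact (ZMod.intCast_zmod_eq_zero_iff_dvd n p).1 h0
  have hxK : x ∉ K := by
    intro hxk
    have h1 := hxpow 1 (by simpa using hxk)
    have := Int.le_of_dvd one_pos h1
    omega
  have hxp : x ^ p = 1 := hN₁p x hxN
  have hxzero : ∀ n : ℤ, (p : ℤ) ∣ n → x ^ n = 1 := by
    rintro n ⟨m, rfl⟩
    rw [zpow_mul, zpow_natCast, hxp, one_zpow]
  -- the element z
  set zh : N₂ := e₂.symm (Multiplicative.ofAdd (1 : ZMod p)) with hzh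
  set z : G := (zh : G) with hz
  have hzN : z ∈ N₂ := zh.2
  have hz1 : z ≠ 1 := by
    intro h
    have : zh = 1 := Subtype.ext h
    have h2 : Multiplicative.ofAdd (1 : ZMod p) = 1 := by
      rw [← e₂.apply_symm_apply (Multiplicative.ofAdd (1 : ZMod p)), ← hzh, this, map_one]
    have : (1 : ZMod p) = 0 := h2
    exact one_ne_zero this
  have hzp : z ^ p = 1 := by
    have : zh ^ p = 1 := by
      apply e₂.injective
      rw [map_pow, map_one]
      apply Multiplicative.toAdd.injective
      show p • (Multiplicative.toAdd (e₂ zh)) = 0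
      rw [hzh, e₂.apply_symm_apply]
      show p • (1 : ZMod p) = 0
      simp [ZMod.natCast_self]
    calc z ^ p = ((zh ^ p : N₂) : G) := by rw [SubmonoidClass.coe_pow]
      _ = 1 := by rw [this]; rfl
  have horderz : orderOf z = p := orderOf_eq_prime hzp hz1
  have hzzero : ∀ n : ℤ, z ^ n = 1 ↔ (p : ℤ) ∣ n := by
    intro n
    rw [← orderOf_dvd_iff_zpow_eq_one, horderz]
  -- S = N₁ ⊔ N₂
  set S : Subgroup G := N₁ ⊔ N₂ with hS
  haveI : S.Normal := Subgroup.sup_normal _ _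
  have hcardS : Nat.card S = p ^ (a + 1) := by
    have hle : Nat.card S ≤ p ^ (a + 1) := by
      have hset : (S : Set G) = (N₁ : Set G) * (N₂ : Set G) := Subgroup.mul_normal N₁ N₂
      calc Nat.card S = Nat.card ((N₁ : Set G) * (N₂ : Set G)) := by
            rw [← SetLike.coe_sort_coe S, hset]
        _ ≤ Nat.card (N₁ : Set G) * Nat.card (N₂ : Set G) := Set.natCard_mul_le
        _ = p ^ (a + 1) := by
            rw [SetLike.coe_sort_coe, SetLike.coe_sort_coe, hcard₁, hcard₂, pow_succ]
    have hge : p ^ (a + 1) ≤ Nat.card S := by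
      have := card_mul_le_of_disjoint (le_sup_left : N₁ ≤ S) (le_sup_right : N₂ ≤ S) hinter
      rwa [hcard₁, hcard₂, ← pow_succ] at this
    omega
  -- the subgroup H₂
  set c : G := x * z with hc
  have hcS : c ∈ S := S.mul_mem (Subgroup.mem_sup_left hxN) (Subgroup.mem_sup_right hzN)
  have hcxz : ∀ n : ℤ, c ^ n = x ^ n * z ^ n := fun n => (hcommN x z hxN hzN).mul_zpow n
  set H₂ : Subgroup G := K ⊔ Subgroup.zpowers c with hH₂
  have hH₂S : H₂ ≤ S := sup_le (hKle.trans le_sup_left)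
    (by rw [Subgroup.zpowers_le]; exact hcS)
  -- commuting of c with K
  have hcK : ∀ k ∈ K, ∀ n : ℤ, c ^ n * k = k * c ^ n := by
    intro k hk n
    have h1 : Commute k x := hcomm₁ k x (hKle hk) hxN
    have h2 : Commute k z := hcommN k z (hKle hk) hzN
    exact (((h1.mul_right h2).symm).zpow_left n).eq
  -- membership characterization of H₂
  have hmem : ∀ w : G, w ∈ H₂ → ∃ k ∈ K, ∃ n : ℤ, w = k * c ^ n := by
    have hT : ∃ T : Subgroup G, (T : Set G) = {w | ∃ k ∈ K, ∃ n : ℤ, w = k * c ^ n} := by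
      refine ⟨⟨⟨⟨{w | ∃ k ∈ K, ∃ n : ℤ, w = k * c ^ n}, ?_⟩, ?_⟩, ?_⟩, rfl⟩
      · rintro w₁ w₂ ⟨k₁, hk₁, n₁, rfl⟩ ⟨k₂, hk₂, n₂, rfl⟩
        refine ⟨k₁ * k₂, K.mul_mem hk₁ hk₂, n₁ + n₂, ?_⟩
        rw [mul_assoc k₁, ← mul_assoc (c ^ n₁), hcK k₂ hk₂ n₁, mul_assoc k₂, ← zpow_add,
          ← mul_assoc]
      · exact ⟨1, K.one_mem, 0, by simp⟩
      · rintro w ⟨k, hk, n, rfl⟩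
        refine ⟨k⁻¹, K.inv_mem hk, -n, ?_⟩
        rw [mul_inv_rev, ← zpow_neg, hcK k⁻¹ (K.inv_mem hk) (-n)]
    obtain ⟨T, hTset⟩ := hT
    have hle : H₂ ≤ T := by
      apply sup_le
      · intro k hk
        have : k ∈ (T : Set G) := by rw [hTset]; exact ⟨k, hk, 0, by simp⟩
        exact this
      · intro w hw
        obtain ⟨n, rfl⟩ := Subgroup.mem_zpowers_iff.1 hw
        have : c ^ n ∈ (T : Set G) := by rw [hTset]; exact ⟨1, K.one_mem, n, by simp⟩
        exact this
    intro w hw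
    have : w ∈ (T : Set G) := hle hw
    rwa [hTset] at this
  -- H₂ ⊓ N₁ ≤ K
  have hH₂N₁ : H₂ ⊓ N₁ ≤ K := by
    rintro w ⟨hw₂, hw₁⟩
    obtain ⟨k, hk, n, rfl⟩ := hmem _ hw₂
    rw [hcxz, ← mul_assoc] at hw₁ ⊢
    have hzn : z ^ n ∈ N₁ ⊓ N₂ := by
      constructor
      · have : z ^ n = (k * x ^ n)⁻¹ * (k * x ^ n * z ^ n) := by group
        rw [this]
        exact N₁.mul_mem (N₁.inv_mem (N₁.mul_mem (hKle hk) (N₁.zpow_mem hxN n))) hw₁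
      · exact N₂.zpow_mem hzN n
    rw [hinter, Subgroup.mem_bot] at hzn
    have hpn : (p : ℤ) ∣ n := (hzzero n).1 hzn
    rw [hzn, hxzero n hpn, mul_one, mul_one]
    exact hk
  -- H₂ ⊓ N₂ = ⊥
  have hH₂N₂ : H₂ ⊓ N₂ = ⊥ := by
    rw [eq_bot_iff]
    rintro w ⟨hw₂, hwn⟩
    rw [Subgroup.mem_bot]
    obtain ⟨k, hk, n, rfl⟩ := hmem _ hw₂
    rw [hcxz, ← mul_assoc] at hwn ⊢
    have hkx : k * x ^ n ∈ N₁ ⊓ N₂ := by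
      constructor
      · exact N₁.mul_mem (hKle hk) (N₁.zpow_mem hxN n)
      · have : k * x ^ n = (k * x ^ n * z ^ n) * (z ^ n)⁻¹ := by group
        rw [this]
        exact N₂.mul_mem hwn (N₂.inv_mem (N₂.zpow_mem hzN n))
    rw [hinter, Subgroup.mem_bot] at hkx
    have hxk : x ^ n ∈ K := by
      rw [eq_inv_of_mul_eq_one_right hkx]
      exact K.inv_mem hk
    have hpn : (p : ℤ) ∣ n := hxpow n hxk
    rw [hkx, (hzzero n).2 hpn, one_mul]
  -- c ∉ K and K < H₂
  have hcK' : c ∉ K := by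
    intro hck
    have hzz : z ∈ N₁ ⊓ N₂ := by
      constructor
      · have : z = x⁻¹ * c := by rw [hc]; group
        rw [this]
        exact N₁.mul_mem (N₁.inv_mem hxN) (hKle hck)
      · exact hzN
    rw [hinter, Subgroup.mem_bot] at hzz
    exact hz1 hzz
  have hcH₂ : c ∈ H₂ := Subgroup.mem_sup_right (Subgroup.mem_zpowers c)
  have hKH₂ : Nat.card K < Nat.card H₂ := by
    by_contra h
    push_neg at h
    have : K = H₂ := Subgroup.eq_of_le_of_card_ge le_sup_left h
    exact hcK' (this ▸ hcH₂)
  have hcardH₂ : p ^ a ≤ Nat.card H₂ := by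
    have hdvd : Nat.card H₂ ∣ p ^ (a + 1) := hcardS ▸ Subgroup.card_dvd_of_le hH₂S
    obtain ⟨b, hb, hbe⟩ := (Nat.dvd_prime_pow hp).1 hdvd
    rw [hbe]
    rw [hcardK, hbe] at hKH₂
    have : a - 1 < b := (Nat.pow_lt_pow_iff_right hp1).1 hKH₂
    exact Nat.pow_le_pow_right hp.pos (by omega)
  -- N₁ is not ≤ K
  have hN₁K : ¬ N₁ ≤ K := by
    intro h
    have := Subgroup.card_le_of_le h
    rw [hcard₁, hcardK] at this
    have := (Nat.pow_le_pow_iff_right hp1).1 this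
    omega
  -- normalCore H₁ = ⊥
  have hcore₁ : K.normalCore = ⊥ := by
    rcases hN₁min K.normalCore inferInstance (K.normalCore_le.trans hKle) with h | h
    · exact h
    · exact absurd (h ▸ K.normalCore_le) hN₁K
  -- normalCore H₂ = ⊥
  have hcore₂ : H₂.normalCore = ⊥ := by
    set M : Subgroup G := H₂.normalCore with hM
    have hMle : M ≤ H₂ := H₂.normalCore_le
    haveI : M.Normal := Subgroup.normalCore_normal H₂
    have hMN₁ : M ⊓ N₁ = ⊥ := by
      rcases hN₁min (M ⊓ N₁) inferInstance inf_le_right with h | h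
      · exact h
      · exfalso
        apply hN₁K
        intro w hw
        have hw' : w ∈ M ⊓ N₁ := by rw [h]; exact hw
        exact hH₂N₁ ⟨hMle hw'.1, hw'.2⟩
    rcases hN₁min ((M ⊔ N₂) ⊓ N₁) inferInstance inf_le_right with hY | hY
    · -- Y = ⊥ : M = ⊥
      rw [eq_bot_iff]
      intro m hm
      obtain ⟨k, hk, n, hmeq⟩ := hmem m (hMle hm)
      rw [hcxz, ← mul_assoc] at hmeq
      set y : G := k * x ^ n with hy
      have hyN₁ : y ∈ N₁ := N₁.mul_mem (hKle hk) (N₁.zpow_mem hxN n)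
      have hyY : y ∈ (M ⊔ N₂) ⊓ N₁ := by
        constructor
        · have : y = m * (z ^ n)⁻¹ := by rw [hmeq]; group
          rw [this]
          exact (M ⊔ N₂).mul_mem (Subgroup.mem_sup_left hm)
            (Subgroup.mem_sup_right (N₂.inv_mem (N₂.zpow_mem hzN n)))
        · exact hyN₁
      rw [hY, Subgroup.mem_bot] at hyY
      have : m ∈ H₂ ⊓ N₂ := by
        constructor
        · exact hMle hm
        · rw [hmeq, hyY, one_mul]
          exact N₂.zpow_mem hzN n
      rw [hH₂N₂] at this
      exact this
    · -- Y = N₁ : contradiction via cardinalities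
      exfalso
      have hMS : M ≤ S := hMle.trans hH₂S
      have hMp : Nat.card M ≤ p := by
        have := card_mul_le_of_disjoint hMS (le_sup_left : N₁ ≤ S) hMN₁
        rw [hcard₁, hcardS, pow_succ'] at this
        exact Nat.le_of_mul_le_mul_right this (pow_pos hp.pos a)
      have hN₁sup : N₁ ≤ M ⊔ N₂ := hY ▸ inf_le_left
      have hsupcard : Nat.card (M ⊔ N₂ : Subgroup G) ≤ p * p := by
        have hset : ((M ⊔ N₂ : Subgroup G) : Set G) = (M : Set G) * (N₂ : Set G) :=
          Subgroup.mul_normal M N₂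
        calc Nat.card (M ⊔ N₂ : Subgroup G)
            = Nat.card ((M : Set G) * (N₂ : Set G)) := by
              rw [← SetLike.coe_sort_coe (M ⊔ N₂), hset]
          _ ≤ Nat.card (M : Set G) * Nat.card (N₂ : Set G) := Set.natCard_mul_le
          _ ≤ p * p := by
              rw [SetLike.coe_sort_coe, SetLike.coe_sort_coe, hcard₂]
              exact Nat.mul_le_mul_right p hMp
      have := (Subgroup.card_le_of_le hN₁sup).trans hsupcard
      rw [hcard₁, ← pow_two] at this
      have := (Nat.pow_le_pow_iff_right hp1).1 this
      omega
  -- conclusion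
  refine ⟨K, H₂, hcore₁, hcore₂, ?_, ?_, ?_⟩
  · intro g h
    have hcg : Nat.card (conjSub K g) = p ^ (a - 1) := by rw [conjSub_card, hcardK]
    rw [h] at hcg
    have : p ^ a ≤ p ^ (a - 1) := hcg ▸ hcardH₂
    have := (Nat.pow_le_pow_iff_right hp1).1 this
    omega
  · intro g h
    have h1 : conjSub K g ≤ N₁ := conjSub_le hN₁norm hKle g
    have := card_mul_le_of_disjoint hKle h1 h
    rw [hcardK, conjSub_card, hcardK, hcard₁, ← pow_add] at this
    have := (Nat.pow_le_pow_iff_right hp1).1 this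
    omega
  · intro g h
    have h1 : conjSub H₂ g ≤ S := conjSub_le ‹S.Normal› hH₂S g
    have h2 := card_mul_le_of_disjoint hH₂S h1 h
    rw [conjSub_card, hcardS] at h2
    have h3 : p ^ a * p ^ a ≤ Nat.card H₂ * Nat.card H₂ :=
      Nat.mul_le_mul hcardH₂ hcardH₂
    have := h3.trans h2
    rw [← pow_add] at this
    have := (Nat.pow_le_pow_iff_right hp1).1 this
    omega
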